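/- For every decreasing sequence α and l ≥ 0, x belongs to ⋃_{i=0}^{l} X^k_{α·(i)} if and only if x = (min ⋃_{i=0}^{l} X^k_{α·(i)} + j·2^{k−l}) mod 2^k for some integer j. -/

import Mathlib

/-- The `k`-bit reversal permutation of `{0,…,2^k−1}`. -/
def revBits (k x : ℕ) : ℕ := ∑ i ∈ Finset.range k, 2 ^ i * (x / 2 ^ (k - 1 - i) % 2)

/-- The sets of time slots `Y^k_α`.  A (decreasing) sequence `α = (l_0,…,l_r)` of the paper
is represented here as the list `[l_r, …, l_0]`, with the most recently appended level first:
`Y^k_{()} = {0,…,2^k−1}` and `Y^k_{α·(l)} = {y ∈ Y^k_α : ⌈log₂(y − min Y^k_α + 1)⌉ = l}`. -/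
noncomputable def Y (k : ℕ) : List ℕ → Finset ℕ
  | [] => Finset.range (2 ^ k)
  | l :: α => (Y k α).filter (fun y => Nat.clog 2 (y - sInf {z : ℕ | z ∈ Y k α} + 1) = l)

/-- Validity of the (reversed) sequence: the paper's `α` is strictly decreasing with
entries in `{0,…,k}`, i.e. the reversed list is strictly increasing with entries `≤ k`. -/
def ValidSeq (k : ℕ) (α : List ℕ) : Prop :=
  List.Pairwise (· < ·) α ∧ ∀ l ∈ α, l ≤ k

/-- The ranks `X^k_α = revBits_k(Y^k_α)`. -/
noncomputable def X (k : ℕ) (α : List ℕ) : Finset ℕ := (Y k α).image (revBits k)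

/-- `step^k_{()} = 1` and `step^k_{α·(l)} = 2^{k−l+1}`. -/
def stepA (k : ℕ) : List ℕ → ℕ
  | [] => 1
  | l :: _ => 2 ^ (k - l + 1)

open Finset
lemma sum_two_pow (n : ℕ) : ∑ i ∈ range n, 2 ^ i = 2 ^ n - 1 := by
  induction n with
  | zero => simp
  | succ n ih => rw [Finset.sum_range_succ, ih]; have : 0 < 2 ^ n := Nat.two_pow_pos n; omega

lemma revBits_lt (k x : ℕ) : revBits k x < 2 ^ k := by
  have h1 : revBits k x ≤ ∑ i ∈ range k, 2 ^ i := by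
    apply Finset.sum_le_sum
    intro i _
    have : x / 2 ^ (k - 1 - i) % 2 ≤ 1 := Nat.le_of_lt_succ (Nat.mod_lt _ (by norm_num))
    calc 2 ^ i * (x / 2 ^ (k - 1 - i) % 2) ≤ 2 ^ i * 1 := Nat.mul_le_mul_left _ this
    _ = 2 ^ i := by ring
  rw [sum_two_pow] at h1
  have : 0 < 2 ^ k := Nat.two_pow_pos k
  omega

lemma revBits_succ (k x : ℕ) : revBits (k+1) x = revBits k (x / 2) + 2 ^ k * (x % 2) := by
  unfold revBits
  rw [Finset.sum_range_succ]
  congr 1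
  · apply Finset.sum_congr rfl
    intro i hi
    rw [Finset.mem_range] at hi
    have h1 : k + 1 - 1 - i = (k - 1 - i) + 1 := by omega
    rw [h1, pow_succ, Nat.div_div_eq_div_mul, mul_comm (2 ^ (k-1-i)) 2, ← Nat.div_div_eq_div_mul]
  · simp

lemma revBits_surj (k : ℕ) : ∀ y < 2 ^ k, ∃ x < 2 ^ k, revBits k x = y := by
  induction k with
  | zero =>
    intro y hy
    interval_cases y
    exact ⟨0, by norm_num, by simp [revBits]⟩
  | succ k ih =>
    intro y hy
    obtain ⟨x', hx', hrev⟩ := ih (y % 2 ^ k) (Nat.mod_lt _ (Nat.two_pow_pos k))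
    have h2 : y / 2 ^ k < 2 := by
      rw [Nat.div_lt_iff_lt_mul (Nat.two_pow_pos k)]
      rw [pow_succ] at hy; omega
    have hmd := Nat.mod_add_div y (2 ^ k)
    set q := y / 2 ^ k with hq
    clear_value q
    refine ⟨2 * x' + q, ?_, ?_⟩
    · rw [pow_succ]; omega
    · rw [revBits_succ]
      have ha : (2 * x' + q) / 2 = x' := by omega
      have hb : (2 * x' + q) % 2 = q := by omega
      rw [ha, hb, hrev]
      omega

lemma bit_low {l m s j : ℕ} (hm : 2 ^ l ∣ m) (hs : s < 2 ^ l) (hj : j < l) :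
    (m + s) / 2 ^ j % 2 = s / 2 ^ j % 2 := by
  obtain ⟨m', rfl⟩ := hm
  have h1 : 2 ^ l * m' = 2 ^ j * (2 * (2 ^ (l - j - 1) * m')) := by
    have h0 : (2:ℕ) ^ l = 2 ^ j * 2 * 2 ^ (l - j - 1) := by
      rw [← pow_succ, ← pow_add]; congr 1; omega
    rw [h0]; ring
  rw [h1, Nat.mul_add_div (Nat.two_pow_pos j), Nat.mul_add_mod]

lemma bit_high {l m s j : ℕ} (hm : 2 ^ l ∣ m) (hs : s < 2 ^ l) (hj : l ≤ j) :
    (m + s) / 2 ^ j = m / 2 ^ j := by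
  obtain ⟨m', rfl⟩ := hm
  have h1 : 2 ^ j = 2 ^ l * 2 ^ (j - l) := by rw [← pow_add]; congr 1; omega
  rw [h1, ← Nat.div_div_eq_div_mul, ← Nat.div_div_eq_div_mul,
    Nat.mul_add_div (Nat.two_pow_pos l),
    Nat.div_eq_of_lt hs, Nat.mul_div_cancel_left _ (Nat.two_pow_pos l), add_zero]

lemma bit_zero {l m j : ℕ} (hm : 2 ^ l ∣ m) (hj : j < l) : m / 2 ^ j % 2 = 0 := by
  obtain ⟨m', rfl⟩ := hm
  have h1 : 2 ^ l * m' = 2 ^ j * (2 * (2 ^ (l - j - 1) * m')) := by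
    have h0 : (2:ℕ) ^ l = 2 ^ j * 2 * 2 ^ (l - j - 1) := by
      rw [← pow_succ, ← pow_add]; congr 1; omega
    rw [h0]; ring
  rw [h1, Nat.mul_div_cancel_left _ (Nat.two_pow_pos j), Nat.mul_mod_right]

lemma revBits_eq_sum_low {k l m : ℕ} (hm : 2 ^ l ∣ m) (hl : l ≤ k) :
    revBits k m = ∑ i ∈ range (k - l), 2 ^ i * (m / 2 ^ (k - 1 - i) % 2) := by
  unfold revBits
  rw [Finset.range_eq_Ico, ← Finset.sum_Ico_consecutive _ (Nat.zero_le (k - l)) (by omega : k - l ≤ k),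
    ← Finset.range_eq_Ico]
  have h2 : ∑ i ∈ Finset.Ico (k - l) k, 2 ^ i * (m / 2 ^ (k - 1 - i) % 2) = 0 := by
    apply Finset.sum_eq_zero
    intro i hi
    rw [Finset.mem_Ico] at hi
    rw [bit_zero hm (by omega), mul_zero]
  rw [h2, add_zero]

lemma revBits_lt_of_dvd {k l m : ℕ} (hm : 2 ^ l ∣ m) (hl : l ≤ k) :
    revBits k m < 2 ^ (k - l) := by
  rw [revBits_eq_sum_low hm hl]
  have h1 : ∑ i ∈ range (k - l), 2 ^ i * (m / 2 ^ (k - 1 - i) % 2) ≤ ∑ i ∈ range (k - l), 2 ^ i := by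
    apply Finset.sum_le_sum
    intro i _
    have : m / 2 ^ (k - 1 - i) % 2 ≤ 1 := Nat.le_of_lt_succ (Nat.mod_lt _ (by norm_num))
    calc 2 ^ i * (m / 2 ^ (k - 1 - i) % 2) ≤ 2 ^ i * 1 := Nat.mul_le_mul_left _ this
    _ = 2 ^ i := by ring
  rw [sum_two_pow] at h1
  have : 0 < 2 ^ (k - l) := Nat.two_pow_pos _
  omega

lemma revBits_add {k l m s : ℕ} (hm : 2 ^ l ∣ m) (hs : s < 2 ^ l) (hl : l ≤ k) :
    revBits k (m + s) = revBits k m + 2 ^ (k - l) * revBits l s := by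
  have hsplit : revBits k (m + s) = (∑ i ∈ range (k - l), 2 ^ i * ((m + s) / 2 ^ (k - 1 - i) % 2))
      + ∑ i ∈ Finset.Ico (k - l) k, 2 ^ i * ((m + s) / 2 ^ (k - 1 - i) % 2) := by
    unfold revBits
    rw [Finset.range_eq_Ico, ← Finset.sum_Ico_consecutive _ (Nat.zero_le (k - l)) (by omega : k - l ≤ k),
      ← Finset.range_eq_Ico]
  rw [hsplit, revBits_eq_sum_low hm hl]
  congr 1
  · apply Finset.sum_congr rfl
    intro i hi
    rw [Finset.mem_range] at hi
    rw [bit_high hm hs (by omega)]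
  · unfold revBits
    rw [Finset.sum_Ico_eq_sum_range]
    have hkl : k - (k - l) = l := by omega
    rw [hkl, Finset.mul_sum]
    apply Finset.sum_congr rfl
    intro t ht
    rw [Finset.mem_range] at ht
    have h1 : (m + s) / 2 ^ (k - 1 - (k - l + t)) % 2 = s / 2 ^ (l - 1 - t) % 2 := by
      rw [show k - 1 - (k - l + t) = l - 1 - t by omega]
      exact bit_low hm hs (by omega)
    rw [h1, ← mul_assoc, ← pow_add]


def eA (k : ℕ) : List ℕ → ℕ
  | [] => k
  | l :: _ => l - 1

lemma Y_cons (k l : ℕ) (α : List ℕ) :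
    Y k (l :: α) = (Y k α).filter (fun y => Nat.clog 2 (y - sInf {z : ℕ | z ∈ Y k α} + 1) = l) := rfl

lemma valid_tail {k l : ℕ} {α : List ℕ} (h : ValidSeq k (l :: α)) : ValidSeq k α :=
  ⟨h.1.of_cons, fun x hx => h.2 x (List.mem_cons_of_mem _ hx)⟩

lemma le_eA {k l : ℕ} {α : List ℕ} (h : ValidSeq k (l :: α)) : l ≤ eA k α := by
  cases α with
  | nil => exact h.2 l (List.mem_cons_self)
  | cons h' t =>
    have := (List.pairwise_cons.mp h.1).1 h' (List.mem_cons_self)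
    simp only [eA]
    omega

lemma sInf_Ico {m n : ℕ} (h : m < n) : sInf {z : ℕ | z ∈ Finset.Ico m n} = m := by
  have hm : m ∈ {z : ℕ | z ∈ Finset.Ico m n} := Finset.mem_Ico.mpr ⟨le_rfl, h⟩
  refine le_antisymm (Nat.sInf_le hm) ?_
  have h2 := Nat.sInf_mem (⟨m, hm⟩ : Set.Nonempty {z : ℕ | z ∈ Finset.Ico m n})
  exact (Finset.mem_Ico.mp h2).1

lemma clog2_eq_zero_iff (n : ℕ) : Nat.clog 2 n = 0 ↔ n ≤ 1 := by
  constructor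
  · intro h
    by_contra hn
    have := Nat.clog_pos (b := 2) (by norm_num) (show 2 ≤ n by omega)
    omega
  · intro h; exact Nat.clog_of_right_le_one h 2

lemma clog2_eq_succ_iff (n l : ℕ) : Nat.clog 2 n = l + 1 ↔ 2 ^ l < n ∧ n ≤ 2 ^ (l + 1) := by
  constructor
  · intro h
    exact ⟨(Nat.lt_clog_iff_pow_lt (by norm_num : (1:ℕ) < 2)).mp (by omega),
      (Nat.clog_le_iff_le_pow (by norm_num : (1:ℕ) < 2)).mp (by omega)⟩
  · rintro ⟨h1, h2⟩
    have := (Nat.lt_clog_iff_pow_lt (by norm_num : (1:ℕ) < 2)).mpr h1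
    have := (Nat.clog_le_iff_le_pow (by norm_num : (1:ℕ) < 2)).mpr h2
    omega

lemma Y_struct (k : ℕ) : ∀ α : List ℕ, ValidSeq k α →
    ∃ m, Y k α = Finset.Ico m (m + 2 ^ eA k α) ∧ 2 ^ eA k α ∣ m
  | [] => fun _ => ⟨0, by
      rw [show Y k [] = Finset.range (2 ^ k) from rfl, show eA k [] = k from rfl,
        Finset.range_eq_Ico, zero_add], dvd_zero _⟩
  | l :: α => fun h => by
    obtain ⟨m, hY, hdvd⟩ := Y_struct k α (valid_tail h)
    have hle : l ≤ eA k α := le_eA h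
    have hpos : 0 < 2 ^ eA k α := Nat.two_pow_pos _
    have hsInf : sInf {z : ℕ | z ∈ Y k α} = m := by rw [hY]; exact sInf_Ico (by omega)
    rw [Y_cons, hsInf, hY]
    cases l with
    | zero =>
      refine ⟨m, ?_, by rw [show eA k (0 :: α) = 0 from rfl]; exact one_dvd _⟩
      rw [show eA k (0 :: α) = 0 from rfl]
      ext y
      simp only [Finset.mem_filter, Finset.mem_Ico, clog2_eq_zero_iff, pow_zero]
      omega
    | succ l' =>
      have h2l : 2 ^ (l' + 1) ≤ 2 ^ eA k α := Nat.pow_le_pow_right (by norm_num) hle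
      have h2s : (2:ℕ) ^ (l' + 1) = 2 * 2 ^ l' := by rw [pow_succ]; ring
      refine ⟨m + 2 ^ l', ?_, ?_⟩
      · rw [show eA k ((l' + 1) :: α) = l' from rfl]
        ext y
        simp only [Finset.mem_filter, Finset.mem_Ico, clog2_eq_succ_iff]
        omega
      · rw [show eA k ((l' + 1) :: α) = l' from rfl]
        exact dvd_add (dvd_trans (pow_dvd_pow 2 (by omega)) hdvd) dvd_rfl

lemma Y_union {k l : ℕ} {α : List ℕ} (h : ValidSeq k (l :: α)) {m : ℕ}
    (hY : Y k α = Finset.Ico m (m + 2 ^ eA k α)) :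
    (Finset.range (l + 1)).biUnion (fun i => Y k (i :: α)) = Finset.Ico m (m + 2 ^ l) := by
  have hle : l ≤ eA k α := le_eA h
  have hpos : 0 < 2 ^ eA k α := Nat.two_pow_pos _
  have hsInf : sInf {z : ℕ | z ∈ Y k α} = m := by rw [hY]; exact sInf_Ico (by omega)
  have h2l : 2 ^ l ≤ 2 ^ eA k α := Nat.pow_le_pow_right (by norm_num) hle
  ext y
  simp only [Finset.mem_biUnion, Finset.mem_range, Y_cons, hsInf, Finset.mem_filter]
  simp only [hY, Finset.mem_Ico]
  constructor
  · rintro ⟨i, hi, ⟨hy1, hy2⟩, hclog⟩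
    have : y - m + 1 ≤ 2 ^ i :=
      (Nat.clog_le_iff_le_pow (by norm_num : (1:ℕ) < 2)).mp (by omega)
    have h2i : 2 ^ i ≤ 2 ^ l := Nat.pow_le_pow_right (by norm_num) (by omega)
    exact ⟨hy1, by omega⟩
  · rintro ⟨hy1, hy2⟩
    refine ⟨Nat.clog 2 (y - m + 1), ?_, ⟨hy1, by omega⟩, rfl⟩
    have : Nat.clog 2 (y - m + 1) ≤ l :=
      (Nat.clog_le_iff_le_pow (by norm_num : (1:ℕ) < 2)).mpr (by omega)
    omega


/-- `⋃_{i=0}^{l} X^k_{α·(i)}` is an arithmetic progression mod `2^k` with difference `2^{k−l}`. -/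
theorem X_union_arith_progression (k : ℕ) (α : List ℕ) (l : ℕ) (h : ValidSeq k (l :: α))
    (x : ℕ) :
    x ∈ (Finset.range (l + 1)).biUnion (fun i => X k (i :: α)) ↔
      ∃ j : ℕ, x = (sInf {z : ℕ | z ∈ (Finset.range (l + 1)).biUnion (fun i => X k (i :: α))}
        + j * 2 ^ (k - l)) % 2 ^ k := by
  have hlk : l ≤ k := h.2 l (List.mem_cons_self)
  obtain ⟨m, hY, hdvd⟩ := Y_struct k α (valid_tail h)
  have hle : l ≤ eA k α := le_eA h
  have hdl : 2 ^ l ∣ m := dvd_trans (pow_dvd_pow 2 hle) hdvd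
  set r := revBits k m with hrdef
  have hr : r < 2 ^ (k - l) := revBits_lt_of_dvd hdl hlk
  have hlpos : 0 < 2 ^ l := Nat.two_pow_pos _
  have hkk : (2:ℕ) ^ (k - l) * 2 ^ l = 2 ^ k := by rw [← pow_add]; congr 1; omega
  have hU : (Finset.range (l + 1)).biUnion (fun i => X k (i :: α))
      = (Finset.range (2 ^ l)).image (fun t => r + 2 ^ (k - l) * t) := by
    have h1 : (Finset.range (l + 1)).biUnion (fun i => X k (i :: α))
        = ((Finset.range (l + 1)).biUnion (fun i => Y k (i :: α))).image (revBits k) := by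
      unfold X
      rw [Finset.biUnion_image]
    rw [h1, Y_union h hY]
    ext z
    simp only [Finset.mem_image, Finset.mem_Ico, Finset.mem_range]
    constructor
    · rintro ⟨y, ⟨hy1, hy2⟩, rfl⟩
      refine ⟨revBits l (y - m), revBits_lt l (y - m), ?_⟩
      have h3 : revBits k (m + (y - m)) = revBits k m + 2 ^ (k - l) * revBits l (y - m) :=
        revBits_add hdl (by omega) hlk
      rw [show m + (y - m) = y by omega] at h3
      rw [h3]
    · rintro ⟨t, ht, rfl⟩
      obtain ⟨s, hs, hrs⟩ := revBits_surj l t ht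
      exact ⟨m + s, ⟨by omega, by omega⟩, by rw [revBits_add hdl hs hlk, hrs]⟩
  rw [hU]
  have hrmem : r ∈ (Finset.range (2 ^ l)).image (fun t => r + 2 ^ (k - l) * t) :=
    Finset.mem_image.mpr ⟨0, Finset.mem_range.mpr hlpos, by simp⟩
  have hsInfS : sInf {z : ℕ | z ∈ (Finset.range (2 ^ l)).image (fun t => r + 2 ^ (k - l) * t)}
      = r := by
    refine le_antisymm (Nat.sInf_le hrmem) ?_
    have h2 := Nat.sInf_mem (⟨r, hrmem⟩ :
      Set.Nonempty {z : ℕ | z ∈ (Finset.range (2 ^ l)).image (fun t => r + 2 ^ (k - l) * t)})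
    obtain ⟨t, _, hteq⟩ := Finset.mem_image.mp (Set.mem_setOf_eq.mp h2)
    omega
  rw [hsInfS]
  have key : ∀ t, t < 2 ^ l → r + t * 2 ^ (k - l) < 2 ^ k := by
    intro t ht
    have h4 : (t + 1) * 2 ^ (k - l) ≤ 2 ^ l * 2 ^ (k - l) :=
      Nat.mul_le_mul_right _ (by omega)
    have h5 : (t + 1) * 2 ^ (k - l) = t * 2 ^ (k - l) + 2 ^ (k - l) := by ring
    have h6 : (2:ℕ) ^ l * 2 ^ (k - l) = 2 ^ k := by rw [mul_comm]; exact hkk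
    omega
  simp only [Finset.mem_image, Finset.mem_range]
  constructor
  · rintro ⟨t, ht, rfl⟩
    exact ⟨t, by rw [Nat.mod_eq_of_lt (key t ht), mul_comm]⟩
  · rintro ⟨j, rfl⟩
    set t := j % 2 ^ l with htdef
    have ht : t < 2 ^ l := Nat.mod_lt _ hlpos
    have hmod : (r + j * 2 ^ (k - l)) % 2 ^ k = r + t * 2 ^ (k - l) := by
      have e1 : j = t + 2 ^ l * (j / 2 ^ l) := (Nat.mod_add_div j (2 ^ l)).symm
      have e2 : j * 2 ^ (k - l) = t * 2 ^ (k - l) + (j / 2 ^ l) * 2 ^ k := by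
        calc j * 2 ^ (k - l) = (t + 2 ^ l * (j / 2 ^ l)) * 2 ^ (k - l) := by rw [← e1]
          _ = t * 2 ^ (k - l) + (j / 2 ^ l) * (2 ^ (k - l) * 2 ^ l) := by ring
          _ = t * 2 ^ (k - l) + (j / 2 ^ l) * 2 ^ k := by rw [hkk]
      have e3 : r + j * 2 ^ (k - l) = (r + t * 2 ^ (k - l)) + (j / 2 ^ l) * 2 ^ k := by omega
      rw [e3, Nat.add_mul_mod_self_right, Nat.mod_eq_of_lt (key t ht)]
    rw [hmod]
    exact ⟨t, ht, by rw [mul_comm]⟩
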